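/- Let (X,d) be a metric space, T > 0, and let v : X × (0,T) → ℝ be a function that is nondecreasing in the time variable (i.e. v(x,s) ≤ v(x,t) whenever s ≤ t). Then for every (x,t) ∈ X × (0,T), the quantity limsup_{δ→0+} sup{ (v(x,t) − v(y, t−δ))/δ : y ∈ X, d(x,y) ≤ δ } equals limsup_{δ→0+} sup{ max{v(x,t) − v(y,s), 0}/δ : (y,s) ∈ X×(0,T), max{d(x,y), |t−s|} ≤ δ }. -/
import Mathlib


open Set Filter Topology

/-- for v nondecreasing in time, the past-time subslope equals the
two-sided positive-part variant. -/
theorem stmt_1 {X : Type*} [MetricSpace X] (T : ℝ) (hT : 0 < T) (v : X → ℝ → ℝ)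
    (hmono : ∀ x : X, ∀ s ∈ Set.Ioo 0 T, ∀ t ∈ Set.Ioo 0 T, s ≤ t → v x s ≤ v x t)
    (x : X) (t : ℝ) (ht : t ∈ Set.Ioo 0 T) :
    Filter.limsup (fun δ : ℝ =>
        sSup {r : ℝ | ∃ y : X, dist x y ≤ δ ∧ r = (v x t - v y (t - δ)) / δ}) (𝓝[>] (0:ℝ))
      =
    Filter.limsup (fun δ : ℝ =>
        sSup {r : ℝ | ∃ y : X, ∃ s : ℝ, s ∈ Set.Ioo 0 T ∧
          max (dist x y) |t - s| ≤ δ ∧ r = max (v x t - v y s) 0 / δ}) (𝓝[>] (0:ℝ)) := by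
  apply Filter.limsup_congr
  have hmem : Set.Ioo (0:ℝ) t ∈ 𝓝[>] (0:ℝ) :=
    Ioo_mem_nhdsGT_of_mem ⟨le_refl 0, ht.1⟩
  filter_upwards [hmem] with δ hδ
  obtain ⟨hδ0, hδt⟩ := hδ
  have htδ : t - δ ∈ Set.Ioo 0 T := ⟨by linarith, by linarith [ht.2]⟩
  apply csSup_eq_csSup_of_forall_exists_le
  · rintro r ⟨y, hy, rfl⟩
    refine ⟨max (v x t - v y (t - δ)) 0 / δ, ⟨y, t - δ, htδ, ?_, rfl⟩, ?_⟩
    · have : |t - (t - δ)| = δ := by rw [abs_of_pos (by linarith : (0:ℝ) < t - (t - δ))]; ring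
      rw [this]
      exact max_le hy le_rfl
    · gcongr; exact le_max_left _ _
  · rintro r ⟨y, s, hs, hds, rfl⟩
    have hsge : t - δ ≤ s := by
      have := (abs_le.mp (le_trans (le_max_right _ _) hds)).2
      linarith
    rcases le_or_gt (v x t - v y s) 0 with hle | hlt
    · refine ⟨(v x t - v x (t - δ)) / δ, ⟨x, by simp [hδ0.le], rfl⟩, ?_⟩
      rw [max_eq_right hle]
      have : 0 ≤ v x t - v x (t - δ) := by
        have := hmono x (t - δ) htδ t ht (by linarith)
        linarith
      rw [zero_div]; exact div_nonneg this hδ0.le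
    · refine ⟨(v x t - v y (t - δ)) / δ, ⟨y, le_trans (le_max_left _ _) hds, rfl⟩, ?_⟩
      rw [max_eq_left hlt.le]
      have := hmono y (t - δ) htδ s hs hsge
      gcongr
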